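/- Under the same hypotheses (r-regular G, star set X for non-main μ, G - X = K_s ∇ tK_1, s,t ≥ 2), for each u ∈ X with a = |N_{K_s}(u)| and b = |N_{tK_1}(u)|, the condition ⟨b_u, j⟩ = -1 yields the linear relation a(μ+t) + b(μ+1) = s(μ+t) - μ(μ+1). -/

import Mathlib

open Matrix

open scoped Classical

noncomputable section

variable {V : Type*} [Fintype V] [DecidableEq V]

/-- The real adjacency matrix of a graph. -/
def adjMat (G : SimpleGraph V) : Matrix V V ℝ :=
  letI := Classical.decRel G.Adj
  G.adjMatrix ℝ

/-- `μ` is an (adjacency) eigenvalue of `G`. -/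
def IsEigen (G : SimpleGraph V) (μ : ℝ) : Prop :=
  Module.End.HasEigenvalue (Matrix.toLin' (adjMat G)) μ

/-- The multiplicity of `μ` as an eigenvalue of `G`. -/
def eigMult (G : SimpleGraph V) (μ : ℝ) : ℕ :=
  Module.finrank ℝ (Module.End.eigenspace (Matrix.toLin' (adjMat G)) μ)

/-- `X` is a star set for `μ` in `G`: `|X|` equals the multiplicity of `μ` and `μ` is
not an eigenvalue of `G - X`. -/
def IsStarSet (G : SimpleGraph V) (μ : ℝ) (X : Finset V) : Prop :=
  X.card = eigMult G μ ∧ ¬ IsEigen (G.induce ((↑X : Set V)ᶜ)) μ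

/-- `μ` is a non-main eigenvalue: every `μ`-eigenvector is orthogonal to the
all-ones vector. -/
def IsNonMain (G : SimpleGraph V) (μ : ℝ) : Prop :=
  ∀ x : V → ℝ, (adjMat G).mulVec x = μ • x → x ⬝ᵥ (fun _ => 1) = 0

/-- The join `G ∇ H` of two graphs. -/
def joinG {α β : Type*} (G : SimpleGraph α) (H : SimpleGraph β) : SimpleGraph (α ⊕ β) where
  Adj u v :=
    match u, v with
    | .inl a, .inl b => G.Adj a b
    | .inr a, .inr b => H.Adj a b
    | _, _ => True
  symm := ⟨by rintro (a | a) (b | b) h <;> simp_all <;> exact h.symm⟩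
  loopless := ⟨by
    rintro (a | a) h
    · exact G.loopless.irrefl _ h
    · exact H.loopless.irrefl _ h⟩

/-- The perfect matching graph `nK_2` on `Fin n × Fin 2`. -/
def matchingG (n : ℕ) : SimpleGraph (Fin n × Fin 2) where
  Adj u v := u.1 = v.1 ∧ u.2 ≠ v.2
  symm := ⟨by rintro ⟨i, a⟩ ⟨j, b⟩ ⟨h1, h2⟩; exact ⟨h1.symm, h2.symm⟩⟩
  loopless := ⟨by rintro ⟨i, a⟩ ⟨_, h⟩; exact h rfl⟩

set_option linter.unusedSectionVars false in
lemma adjMat_apply (G : SimpleGraph V) (i j : V) :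
    adjMat G i j = if G.Adj i j then 1 else 0 := by
  simp [adjMat, SimpleGraph.adjMatrix]

/-- In an `r`-regular graph `G` with star set `X` (the left-hand vertices) for a
non-main eigenvalue `μ` and star complement `K_s ∇ tK_1`, each `u ∈ X` with
`a = |N_{K_s}(u)|`, `b = |N_{tK_1}(u)|` satisfies
`a(μ+t) + b(μ+1) = s(μ+t) - μ(μ+1)`. -/
theorem linear_relation {α : Type*} [Fintype α] [DecidableEq α] (s t : ℕ)
    (hs : 2 ≤ s) (ht : 2 ≤ t) (r : ℕ) (G : SimpleGraph (α ⊕ (Fin s ⊕ Fin t)))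
    (hreg : G.IsRegularOfDegree r) (μ : ℝ) (hμ : IsEigen G μ) (hnm : IsNonMain G μ)
    (X : Finset (α ⊕ (Fin s ⊕ Fin t)))
    (hX : X = Finset.univ.map ⟨Sum.inl, Sum.inl_injective⟩)
    (hstar : IsStarSet G μ X)
    (hH : ∀ i j, G.Adj (Sum.inr i) (Sum.inr j) ↔
      (joinG (⊤ : SimpleGraph (Fin s)) (⊥ : SimpleGraph (Fin t))).Adj i j)
    (a b : α → ℕ)
    (ha : ∀ u, a u = (Finset.univ.filter
      (fun i : Fin s => G.Adj (Sum.inl u) (Sum.inr (Sum.inl i)))).card)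
    (hb : ∀ u, b u = (Finset.univ.filter
      (fun i : Fin t => G.Adj (Sum.inl u) (Sum.inr (Sum.inr i)))).card) :
    ∀ u : α, (a u : ℝ) * (μ + t) + (b u : ℝ) * (μ + 1)
      = s * (μ + t) - μ * (μ + 1) := by
  classical
  intro u
  set A : Matrix (α ⊕ (Fin s ⊕ Fin t)) (α ⊕ (Fin s ⊕ Fin t)) ℝ := adjMat G with hA
  set E := Module.End.eigenspace (Matrix.toLin' A) μ with hE
  have hAapp : ∀ i j, A i j = if G.Adj i j then 1 else 0 := fun i j => adjMat_apply G i j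
  have hmemC : ∀ i : Fin s ⊕ Fin t, (Sum.inr i : (α ⊕ (Fin s ⊕ Fin t))) ∈ ((↑X : Set (α ⊕ (Fin s ⊕ Fin t)))ᶜ) := by
    intro i; simp [hX]
  have hmemX : ∀ v : α, (Sum.inl v : (α ⊕ (Fin s ⊕ Fin t))) ∉ ((↑X : Set (α ⊕ (Fin s ⊕ Fin t)))ᶜ) := by
    intro v; simp [hX]
  -- restriction map
  set ρ : E →ₗ[ℝ] (α → ℝ) :=
    (LinearMap.funLeft ℝ ℝ (Sum.inl : α → (α ⊕ (Fin s ⊕ Fin t)))).comp E.subtype with hρ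
  have hinj : Function.Injective ρ := by
    rw [← LinearMap.ker_eq_bot, Submodule.eq_bot_iff]
    rintro ⟨w, hwE⟩ hker
    have h0 : ∀ v : α, w (Sum.inl v) = 0 := fun v => congrFun hker v
    have hw' : A.mulVec w = μ • w := by
      have := Module.End.mem_eigenspace_iff.mp hwE
      rwa [Matrix.toLin'_apply] at this
    have hz : ∀ i, w (Sum.inr i) = 0 := by
      by_contra hc
      push_neg at hc
      obtain ⟨i0, hi0⟩ := hc
      set H := G.induce ((↑X : Set (α ⊕ (Fin s ⊕ Fin t)))ᶜ) with hHdef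
      set z : ((↑X : Set (α ⊕ (Fin s ⊕ Fin t)))ᶜ : Set (α ⊕ (Fin s ⊕ Fin t))) → ℝ := fun v => w v.1 with hzdef
      have hbij : Function.Bijective
          (fun i : Fin s ⊕ Fin t => (⟨Sum.inr i, hmemC i⟩ : ((↑X : Set (α ⊕ (Fin s ⊕ Fin t)))ᶜ : Set (α ⊕ (Fin s ⊕ Fin t))))) := by
        constructor
        · intro i j hij
          exact Sum.inr_injective (congrArg Subtype.val hij)
        · rintro ⟨(v | i), hv⟩
          · exact absurd hv (hmemX v)
          · exact ⟨i, rfl⟩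
      have hzeig : (adjMat H).mulVec z = μ • z := by
        funext v
        have hv := congrFun hw' v.1
        rw [Matrix.mulVec, dotProduct, Fintype.sum_sum_type] at hv
        have h1 : ∑ x : α, A v.1 (Sum.inl x) * w (Sum.inl x) = 0 := by
          simp [h0]
        rw [h1, zero_add] at hv
        have h2 : (adjMat H).mulVec z v
            = ∑ i : Fin s ⊕ Fin t, A v.1 (Sum.inr i) * w (Sum.inr i) := by
          rw [Matrix.mulVec, dotProduct]
          refine (Fintype.sum_bijective _ hbij _ _ ?_).symm
          intro i
          rfl
        rw [h2, hv]
        rfl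
      have heig : IsEigen H μ := by
        refine Module.End.hasEigenvalue_of_hasEigenvector
          (x := z) ⟨Module.End.mem_eigenspace_iff.mpr ?_, ?_⟩
        · rw [Matrix.toLin'_apply]; exact hzeig
        · intro hz0
          exact hi0 (congrFun hz0 ⟨Sum.inr i0, hmemC i0⟩)
      exact hstar.2 heig
    refine Subtype.ext ?_
    funext v
    rcases v with v | i
    · exact h0 v
    · exact hz i
  have hfinE : FiniteDimensional ℝ E := by infer_instance
  have hfr : Module.finrank ℝ E = Fintype.card α := by
    have h1 : X.card = Fintype.card α := by simp [hX]
    have h2 : eigMult G μ = Module.finrank ℝ E := rfl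
    rw [← h2, ← hstar.1, h1]
  have hsurj : Function.Surjective ρ := by
    rw [← LinearMap.range_eq_top]
    apply Submodule.eq_top_of_finrank_eq
    rw [(LinearEquiv.ofInjective ρ hinj).finrank_eq.symm, hfr,
      Module.finrank_fintype_fun_eq_card]
  obtain ⟨⟨w, hwE⟩, hws⟩ := hsurj (fun v => if v = u then (1:ℝ) else 0)
  have hwl : ∀ v : α, w (Sum.inl v) = if v = u then (1:ℝ) else 0 :=
    fun v => congrFun hws v
  have hw' : A.mulVec w = μ • w := by
    have := Module.End.mem_eigenspace_iff.mp hwE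
    rwa [Matrix.toLin'_apply] at this
  set P : ℝ := ∑ i : Fin s, w (Sum.inr (Sum.inl i)) with hP
  set Q : ℝ := ∑ k : Fin t, w (Sum.inr (Sum.inr k)) with hQ
  -- row equations
  have row1 : ∀ i : Fin s,
      (if G.Adj (Sum.inl u) (Sum.inr (Sum.inl i)) then (1:ℝ) else 0)
        + (P - w (Sum.inr (Sum.inl i))) + Q = μ * w (Sum.inr (Sum.inl i)) := by
    intro i
    have h := congrFun hw' (Sum.inr (Sum.inl i))
    rw [Matrix.mulVec, dotProduct, Fintype.sum_sum_type,
      Fintype.sum_sum_type] at h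
    have h1 : ∑ x : α, A (Sum.inr (Sum.inl i)) (Sum.inl x) * w (Sum.inl x)
        = if G.Adj (Sum.inl u) (Sum.inr (Sum.inl i)) then (1:ℝ) else 0 := by
      simp only [hwl, mul_ite, mul_one, mul_zero,
        Finset.sum_ite_eq', Finset.mem_univ, if_true]
      rw [hAapp]
      simp [G.adj_comm]
    have h2 : ∑ j : Fin s, A (Sum.inr (Sum.inl i)) (Sum.inr (Sum.inl j)) * w (Sum.inr (Sum.inl j))
        = P - w (Sum.inr (Sum.inl i)) := by
      have hterm : ∀ j : Fin s,
          A (Sum.inr (Sum.inl i)) (Sum.inr (Sum.inl j)) * w (Sum.inr (Sum.inl j))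
          = w (Sum.inr (Sum.inl j)) - (if j = i then w (Sum.inr (Sum.inl j)) else 0) := by
        intro j
        rw [hAapp]
        by_cases hji : j = i
        · subst hji
          simp [hH, joinG]
        · have : G.Adj (Sum.inr (Sum.inl i)) (Sum.inr (Sum.inl j)) := by
            rw [hH]
            simp [joinG]
            exact fun h => hji h.symm
          simp [this, hji]
      rw [Finset.sum_congr rfl (fun j _ => hterm j), Finset.sum_sub_distrib,
        Finset.sum_ite_eq' Finset.univ i (fun j => w (Sum.inr (Sum.inl j)))]
      simp [hP]
    have h3 : ∑ k : Fin t, A (Sum.inr (Sum.inl i)) (Sum.inr (Sum.inr k)) * w (Sum.inr (Sum.inr k))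
        = Q := by
      refine Finset.sum_congr rfl ?_ |>.trans rfl
      intro k _
      rw [hAapp]
      have : G.Adj (Sum.inr (Sum.inl i)) (Sum.inr (Sum.inr k)) := by
        rw [hH]; simp [joinG]
      simp [this]
    rw [h1, h2, h3] at h
    simp only [Pi.smul_apply, smul_eq_mul] at h
    linarith [h]
  have row2 : ∀ k : Fin t,
      (if G.Adj (Sum.inl u) (Sum.inr (Sum.inr k)) then (1:ℝ) else 0)
        + P = μ * w (Sum.inr (Sum.inr k)) := by
    intro k
    have h := congrFun hw' (Sum.inr (Sum.inr k))
    rw [Matrix.mulVec, dotProduct, Fintype.sum_sum_type,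
      Fintype.sum_sum_type] at h
    have h1 : ∑ x : α, A (Sum.inr (Sum.inr k)) (Sum.inl x) * w (Sum.inl x)
        = if G.Adj (Sum.inl u) (Sum.inr (Sum.inr k)) then (1:ℝ) else 0 := by
      simp only [hwl, mul_ite, mul_one, mul_zero,
        Finset.sum_ite_eq', Finset.mem_univ, if_true]
      rw [hAapp]
      simp [G.adj_comm]
    have h2 : ∑ j : Fin s, A (Sum.inr (Sum.inr k)) (Sum.inr (Sum.inl j)) * w (Sum.inr (Sum.inl j))
        = P := by
      refine Finset.sum_congr rfl ?_ |>.trans rfl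
      intro j _
      rw [hAapp]
      have : G.Adj (Sum.inr (Sum.inr k)) (Sum.inr (Sum.inl j)) := by
        rw [hH]; simp [joinG]
      simp [this]
    have h3 : ∑ l : Fin t, A (Sum.inr (Sum.inr k)) (Sum.inr (Sum.inr l)) * w (Sum.inr (Sum.inr l))
        = 0 := by
      refine Finset.sum_eq_zero ?_
      intro l _
      rw [hAapp]
      have : ¬ G.Adj (Sum.inr (Sum.inr k)) (Sum.inr (Sum.inr l)) := by
        rw [hH]; simp [joinG]
      simp [this]
    rw [h1, h2, h3] at h
    simp only [Pi.smul_apply, smul_eq_mul] at h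
    linarith [h]
  -- summed equations
  have E1 : (a u : ℝ) + ((s : ℝ) * P - P) + (s : ℝ) * Q = μ * P := by
    have hsum := Finset.sum_congr rfl (fun i (_ : i ∈ Finset.univ) => row1 i)
    rw [Finset.sum_add_distrib, Finset.sum_add_distrib, Finset.sum_sub_distrib,
      Finset.sum_const, Finset.sum_const, ← Finset.mul_sum] at hsum
    have hcard : ∑ i : Fin s, (if G.Adj (Sum.inl u) (Sum.inr (Sum.inl i)) then (1:ℝ) else 0)
        = (a u : ℝ) := by
      rw [Finset.sum_boole, ha]
    rw [hcard] at hsum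
    simpa [hP, hQ, nsmul_eq_mul, mul_comm] using hsum
  have E2 : (b u : ℝ) + (t : ℝ) * P = μ * Q := by
    have hsum := Finset.sum_congr rfl (fun k (_ : k ∈ Finset.univ) => row2 k)
    rw [Finset.sum_add_distrib, Finset.sum_const, ← Finset.mul_sum] at hsum
    have hcard : ∑ k : Fin t, (if G.Adj (Sum.inl u) (Sum.inr (Sum.inr k)) then (1:ℝ) else 0)
        = (b u : ℝ) := by
      rw [Finset.sum_boole, hb]
    rw [hcard] at hsum
    simpa [hQ, nsmul_eq_mul, mul_comm] using hsum
  have E3 : (1 : ℝ) + P + Q = 0 := by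
    have h := hnm w hw'
    rw [dotProduct, Fintype.sum_sum_type, Fintype.sum_sum_type] at h
    have h1 : ∑ x : α, w (Sum.inl x) * (1:ℝ) = 1 := by
      simp only [hwl, mul_one]
      rw [Finset.sum_ite_eq' Finset.univ u (fun _ => (1:ℝ))]
      simp
    rw [h1] at h
    simp only [mul_one] at h
    linarith [h]
  linear_combination (μ + t) * E1 + (μ + 1) * E2 + (μ^2 + μ - s*μ - s*t) * E3

end
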